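/- Let w be a word of length n over an alphabet Σ with |Σ| = σ. Then the number of pairs (i, j) such that the fragment w[i..j] is an imbalanced parameterized square is at most (σ choose 2)·n. In particular, at most (σ choose 2) prefixes of w are imbalanced parameterized squares. -/

import Mathlib

/-- Words `u` and `v` are parameterized-equivalent if `|u| = |v|` and there is a bijection
`f : Alph(u) → Alph(v)` with `v[i] = f(u[i])` for all `i`; equivalently, `v = u.map f` for
some function `f` injective on the set of letters of `u` (then `f` automatically maps
`Alph(u)` bijectively onto `Alph(v)`). -/
def ParamEquiv {α : Type*} (u v : List α) : Prop :=
  ∃ f : α → α, Set.InjOn f {a | a ∈ u} ∧ v = u.map f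

section Aux

variable {α : Type*}

def GoodHalf (w : List α) (m : ℕ) : Prop :=
  ∃ u v : List α, u.length = m ∧ v.length = m ∧ (u ++ v) <+: w ∧
    ParamEquiv u v ∧ {a | a ∈ u} ≠ {a | a ∈ v}

def Wit (w : List α) (m : ℕ) (a b : α) : Prop :=
  a ∈ w.take m ∧ b ∉ w.take m ∧ (∀ i < m, w[i]? ≠ some b) ∧
  (∃ i, m ≤ i ∧ i < 2*m ∧ w[i]? = some b) ∧
  (∀ i < m, (w[m + i]? = some b ↔ w[i]? = some a))

lemma wit_exists {w : List α} {m : ℕ} (h : GoodHalf w m) : ∃ a b, Wit w m a b := by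
  obtain ⟨u, v, hu, hv, hpre, ⟨f, hinj, hmap⟩, hne⟩ := h
  have hV : {a | a ∈ v} = f '' {a | a ∈ u} := by
    ext c; simp [hmap, List.mem_map, Set.mem_image, eq_comm]
  have hnotsub : ¬ {a | a ∈ v} ⊆ {a | a ∈ u} := by
    intro hsub
    exact hne ((Set.eq_of_subset_of_ncard_le hsub
      (by rw [hV, Set.ncard_image_of_injOn hinj]) (u.finite_toSet)).symm)
  obtain ⟨b, hbv, hbu⟩ := Set.not_subset.1 hnotsub
  have hbv' : b ∈ v := hbv
  have hbu' : b ∉ u := hbu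
  obtain ⟨a, hau, hfa⟩ : ∃ a ∈ u, f a = b := by
    rw [hV] at hbv; obtain ⟨a, ha, hfa⟩ := hbv; exact ⟨a, ha, hfa⟩
  obtain ⟨t, ht⟩ := hpre
  have hw : w = u ++ (v ++ t) := by rw [← ht]; simp
  have hiu : ∀ i < m, w[i]? = u[i]? := by
    intro i hi
    rw [hw, List.getElem?_append, if_pos (by omega)]
  have hiv : ∀ i < m, w[m + i]? = v[i]? := by
    intro i hi
    rw [hw, List.getElem?_append, if_neg (by omega), List.getElem?_append,
      if_pos (by omega), hu]
    congr 1; omega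
  have hutake : u = w.take m := by
    have : u <+: w := ⟨v ++ t, hw.symm⟩
    rw [List.prefix_iff_eq_take] at this; rw [← hu]; exact this
  refine ⟨a, b, ?_, ?_, ?_, ?_, ?_⟩
  · rw [← hutake]; exact hau
  · rw [← hutake]; exact hbu'
  · intro i hi hcon
    rw [hiu i hi] at hcon
    exact hbu' (List.mem_of_getElem? hcon)
  · obtain ⟨j, hj⟩ := List.mem_iff_getElem?.1 hbv'
    have hjm : j < m := by
      by_contra hcon
      rw [List.getElem?_eq_none (by omega)] at hj
      cases hj
    exact ⟨m + j, by omega, by omega, by rw [hiv j hjm]; exact hj⟩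
  · intro i hi
    rw [hiu i hi, hiv i hi, hmap, List.getElem?_map]
    have hui : ∃ c, u[i]? = some c := by
      refine ⟨u[i], ?_⟩
      rw [List.getElem?_eq_getElem]
    obtain ⟨c, hc⟩ := hui
    have hcu : c ∈ u := List.mem_of_getElem? hc
    rw [hc]
    constructor
    · intro hcon
      simp only [Option.map_some] at hcon
      have : f c = f a := by rw [hfa]; exact Option.some.inj hcon
      rw [hinj hcu hau this]
    · intro hcon
      have : c = a := Option.some.inj hcon
      simp [this, hfa]

end Aux

lemma no_share {w : List α} {m1 m2 : ℕ} {a b : α} (h12 : m1 < m2)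
    (W1 : Wit w m1 a b) (W2 : Wit w m2 a b) : False := by
  obtain ⟨-, -, hb1, ⟨i1, hi1m, hi1M, hi1b⟩, hab1⟩ := W1
  obtain ⟨-, -, hb2, -, hab2⟩ := W2
  set Occ : Set ℕ := {i | w[i]? = some b} with hOcc
  have hne : Occ.Nonempty := ⟨i1, hi1b⟩
  set p := sInf Occ with hp
  have hpb : w[p]? = some b := Nat.sInf_mem hne
  have hmin : ∀ q < p, w[q]? ≠ some b := fun q hq => Nat.notMem_of_lt_sInf hq
  have hpm2 : m2 ≤ p := by
    by_contra hcon
    exact hb2 p (by omega) hpb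
  have hpM : p < 2 * m1 := by
    have := Nat.sInf_le (show i1 ∈ Occ from hi1b)
    omega
  -- i2 := p - m2
  have hi2m : p - m2 < m1 := by omega
  have ha2 : w[p - m2]? = some a := by
    have := (hab2 (p - m2) (by omega)).1
    rw [show m2 + (p - m2) = p by omega] at this
    exact this hpb
  have hb1' : w[m1 + (p - m2)]? = some b := (hab1 (p - m2) hi2m).2 ha2
  exact hmin (m1 + (p - m2)) (by omega) hb1'

lemma key [Fintype α] (w : List α) :
    {m : ℕ | GoodHalf w m}.ncard ≤ (Fintype.card α).choose 2 := by
  classical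
  by_cases hemp : {m : ℕ | GoodHalf w m} = ∅
  · rw [hemp]; simp
  obtain ⟨m0, hm0⟩ := Set.nonempty_iff_ne_empty.2 hemp
  obtain ⟨a0, -, -⟩ := wit_exists hm0
  have hne0 : Nonempty α := ⟨a0⟩
  have hch : ∀ m : ℕ, GoodHalf w m → ∃ a b, Wit w m a b := fun m hm => wit_exists hm
  choose! A B hW using hch
  set M := {m : ℕ | GoodHalf w m} with hM
  have hMfin : M.Finite := by
    apply Set.Finite.subset (Set.finite_Iic w.length)
    rintro m ⟨u, v, hu, hv, hpre, -⟩
    have := hpre.length_le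
    simp only [List.length_append, hu, hv] at this
    exact Set.mem_Iic.2 (by omega)
  have hAB : ∀ m ∈ M, A m ∈ w.take m ∧ B m ∉ w.take m := by
    intro m hm
    obtain ⟨h1, h2, -⟩ := hW m hm
    exact ⟨h1, h2⟩
  have swap : ∀ m1 m2, m1 ∈ M → m2 ∈ M → m1 < m2 →
      ({A m1, B m1} : Finset α) = {A m2, B m2} → False := by
    intro m1 m2 hm1 hm2 hlt hfe
    have htk : w.take m1 <+: w.take m2 :=
      (List.take_isPrefix_take (l := w)).2 (Or.inl (le_of_lt hlt))
    have hA1 : A m1 ∈ w.take m2 := htk.subset (hAB m1 hm1).1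
    have hmem : A m1 ∈ ({A m2, B m2} : Finset α) := by
      rw [← hfe]; simp
    have hmemB : B m1 ∈ ({A m2, B m2} : Finset α) := by
      rw [← hfe]; simp
    simp only [Finset.mem_insert, Finset.mem_singleton] at hmem hmemB
    rcases hmem with hA | hA
    · rcases hmemB with hB | hB
      · have heq : A m1 = B m1 := by rw [hA, hB]
        have h1 := (hAB m1 hm1).1
        have h2 := (hAB m1 hm1).2
        rw [heq] at h1
        exact h2 h1
      · exact no_share hlt (hW m1 hm1) (hA ▸ hB ▸ hW m2 hm2)
    · exact (hAB m2 hm2).2 (hA ▸ hA1)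
  have hinj : Set.InjOn (fun m => ({A m, B m} : Finset α)) M := by
    intro m1 hm1 m2 hm2 hfe
    by_contra hne
    rcases lt_or_gt_of_ne hne with h | h
    · exact swap m1 m2 hm1 hm2 h hfe
    · exact swap m2 m1 hm2 hm1 h hfe.symm
  calc M.ncard = ((fun m => ({A m, B m} : Finset α)) '' M).ncard :=
        (Set.ncard_image_of_injOn hinj).symm
    _ ≤ (Finset.powersetCard 2 (Finset.univ : Finset α) : Set (Finset α)).ncard := by
        apply Set.ncard_le_ncard _ (Finset.finite_toSet _)
        rintro - ⟨m, hm, rfl⟩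
        refine Finset.mem_coe.2 (Finset.mem_powersetCard.2 ⟨Finset.subset_univ _, ?_⟩)
        apply Finset.card_pair
        intro hcon
        have h1 := (hAB m hm).1
        have h2 := (hAB m hm).2
        rw [hcon] at h1
        exact h2 h1
    _ = (Fintype.card α).choose 2 := by
        rw [Set.ncard_coe_finset, Finset.card_powersetCard, Finset.card_univ]

lemma ncard_biUnion_le {β ι : Type*} (s : Finset ι) (T : ι → Set β) :
    (⋃ i ∈ s, T i).ncard ≤ ∑ i ∈ s, (T i).ncard := by
  classical
  induction s using Finset.induction_on with
  | empty => simp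
  | insert _ _ h ih =>
      rw [Finset.set_biUnion_insert, Finset.sum_insert h]
      exact (Set.ncard_union_le _ _).trans (by omega)

lemma goodHalf_finite (w : List α) : {m : ℕ | GoodHalf w m}.Finite := by
  apply Set.Finite.subset (Set.finite_Iic w.length)
  rintro m ⟨u, v, hu, hv, hpre, -⟩
  have := hpre.length_le
  simp only [List.length_append, hu, hv] at this
  exact Set.mem_Iic.2 (by omega)



/-- Let `w` be a word of length `n` over an alphabet of size `σ`.  The number of pairs of
positions (encoded as (0-based start, end-exclusive) pairs) whose fragment is an imbalanced
parameterized square is at most `(σ choose 2) · n`; in particular, at most `(σ choose 2)`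
prefixes of `w` are imbalanced parameterized squares. -/
theorem imbalanced_parameterized_squares_bound {α : Type*} [Fintype α] (w : List α) (n : ℕ)
    (hn : w.length = n) :
    ({p : ℕ × ℕ | ∃ x u v y : List α, w = x ++ u ++ v ++ y ∧
        x.length = p.1 ∧ x.length + u.length + v.length = p.2 ∧
        u.length = v.length ∧ ParamEquiv u v ∧
        {a | a ∈ u} ≠ {a | a ∈ v}}.ncard ≤ (Fintype.card α).choose 2 * n) ∧
    ({s : List α | s <+: w ∧ ∃ u v : List α, s = u ++ v ∧
        u.length = v.length ∧ ParamEquiv u v ∧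
        {a | a ∈ u} ≠ {a | a ∈ v}}.ncard ≤ (Fintype.card α).choose 2) := by
  constructor
  · -- part 1
    set P : Set (ℕ × ℕ) := {p : ℕ × ℕ | ∃ x u v y : List α, w = x ++ u ++ v ++ y ∧
        x.length = p.1 ∧ x.length + u.length + v.length = p.2 ∧
        u.length = v.length ∧ ParamEquiv u v ∧
        {a | a ∈ u} ≠ {a | a ∈ v}} with hP
    set T : ℕ → Set (ℕ × ℕ) :=
      fun i => (fun m => (i, i + 2*m)) '' {m | GoodHalf (w.drop i) m} with hT
    have hTfin : ∀ i, (T i).Finite := fun i => (goodHalf_finite _).image _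
    have hsub : P ⊆ ⋃ i ∈ Finset.range n, T i := by
      rintro p ⟨x, u, v, y, hw, hx, hj, hlen, hpe, hne⟩
      have hupos : 1 ≤ u.length := by
        rcases Nat.eq_zero_or_pos u.length with h0 | h1
        · exfalso
          have hu0 : u = [] := List.length_eq_zero_iff.1 h0
          have hv0 : v = [] := List.length_eq_zero_iff.1 (by omega)
          exact hne (by rw [hu0, hv0])
        · exact h1
      have hwn : x.length + u.length + v.length + y.length = n := by
          rw [← hn, hw]; simp [List.length_append]; omega
      have hin : p.1 < n := by omega
      refine Set.mem_biUnion (Finset.mem_range.2 hin) ?_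
      refine ⟨u.length, ?_, ?_⟩
      · refine ⟨u, v, rfl, hlen.symm, ?_, hpe, hne⟩
        have hdrop : w.drop p.1 = u ++ (v ++ y) := by
          rw [← hx, hw, show x ++ u ++ v ++ y = x ++ (u ++ (v ++ y)) by simp,
            List.drop_left]
        rw [hdrop]
        exact ⟨y, by simp⟩
      · refine Prod.ext rfl ?_
        show p.1 + 2 * u.length = p.2
        omega
    calc P.ncard ≤ (⋃ i ∈ Finset.range n, T i).ncard := by
          refine Set.ncard_le_ncard hsub ?_
          exact Set.Finite.biUnion (Finset.finite_toSet _) (fun i _ => hTfin i)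
      _ ≤ ∑ i ∈ Finset.range n, (T i).ncard := ncard_biUnion_le _ _
      _ ≤ ∑ _i ∈ Finset.range n, (Fintype.card α).choose 2 := by
          apply Finset.sum_le_sum
          intro i _
          exact (Set.ncard_image_le (goodHalf_finite _)).trans (key (w.drop i))
      _ = (Fintype.card α).choose 2 * n := by
          rw [Finset.sum_const, Finset.card_range, smul_eq_mul, mul_comm]
  · -- part 2
    set S : Set (List α) := {s : List α | s <+: w ∧ ∃ u v : List α, s = u ++ v ∧
        u.length = v.length ∧ ParamEquiv u v ∧
        {a | a ∈ u} ≠ {a | a ∈ v}} with hS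
    have hinj : Set.InjOn (fun s : List α => s.length / 2) S := by
      rintro s1 ⟨h1, u1, v1, rfl, hl1, -⟩ s2 ⟨h2, u2, v2, rfl, hl2, -⟩ he
      simp only [List.length_append] at he
      have hlen : (u1 ++ v1).length = (u2 ++ v2).length := by
        simp only [List.length_append]; omega
      rw [List.prefix_iff_eq_take] at h1 h2
      rw [h1, h2, hlen]
    have hsub : (fun s : List α => s.length / 2) '' S ⊆ {m | GoodHalf w m} := by
      rintro - ⟨s, ⟨hpre, u, v, rfl, hlen, hpe, hne⟩, rfl⟩
      refine ⟨u, v, ?_, ?_, hpre, hpe, hne⟩ <;>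
        · simp only [List.length_append]; omega
    calc S.ncard = ((fun s : List α => s.length / 2) '' S).ncard :=
          (Set.ncard_image_of_injOn hinj).symm
      _ ≤ {m | GoodHalf w m}.ncard := Set.ncard_le_ncard hsub (goodHalf_finite w)
      _ ≤ (Fintype.card α).choose 2 := key w
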